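/- For each k ≥ 4 and each n ≥ 1 there exists a nilpotent evolution algebra E over F of type [1, 1, …, 1, n] (with k entries equal to 1 followed by n) which is not isomorphic to E(U, b, f_1, …, f_{k−1}) for any choice of n-dimensional F-vector space U, nondegenerate symmetric bilinear form b on U, and pairwise commuting, b-symmetric, diagonalizable endomorphisms f_1, …, f_{k−1} of U. -/

import Mathlib

variable {F : Type*} [Field F] {A : Type*} [AddCommGroup A] [Module F A]

/-- For a bilinear multiplication `mul` on `A` and a submodule `S`, the preimage in `A` of the
annihilator of `A/S`, i.e. `{x | x·A ⊆ S and A·x ⊆ S}`. -/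
def annSucc (mul : A →ₗ[F] A →ₗ[F] A) (S : Submodule F A) : Submodule F A where
  carrier := {x | ∀ y : A, mul x y ∈ S ∧ mul y x ∈ S}
  zero_mem' := by intro y; simp
  add_mem' := by
    intro a b ha hb y
    refine ⟨?_, ?_⟩
    · simpa [map_add, LinearMap.add_apply] using S.add_mem (ha y).1 (hb y).1
    · simpa [map_add, LinearMap.add_apply] using S.add_mem (ha y).2 (hb y).2
  smul_mem' := by
    intro c a ha y
    refine ⟨?_, ?_⟩
    · simpa [map_smul, LinearMap.smul_apply] using S.smul_mem c (ha y).1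
    · simpa [map_smul, LinearMap.smul_apply] using S.smul_mem c (ha y).2

/-- The upper annihilating series: `annSeq mul 0 = 0`, and
`annSeq mul (i+1)` is the preimage in `A` of `ann(A / annSeq mul i)`. -/
def annSeq (mul : A →ₗ[F] A →ₗ[F] A) : ℕ → Submodule F A
  | 0 => ⊥
  | i + 1 => annSucc mul (annSeq mul i)

/-- A basis is natural if the product of distinct basis vectors vanishes. -/
def IsNaturalBasis {ι : Type*} (mul : A →ₗ[F] A →ₗ[F] A) (e : Module.Basis ι F A) : Prop :=
  ∀ i j, i ≠ j → mul (e i) (e j) = 0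

/-- An evolution algebra: a commutative algebra admitting a natural basis. -/
def IsEvolutionAlgebra (mul : A →ₗ[F] A →ₗ[F] A) : Prop :=
  (∀ x y, mul x y = mul y x) ∧ ∃ (n : ℕ) (e : Module.Basis (Fin n) F A), IsNaturalBasis mul e

/-- The (nilpotent) algebra `(A, mul)` has type `[n_1, …, n_r]`:  `r` is the least index with
`ann^r(A) = A` and `n_i = dim ann^i(A) - dim ann^{i-1}(A)`. -/
def HasType (mul : A →ₗ[F] A →ₗ[F] A) (L : List ℕ) : Prop :=
  annSeq mul L.length = ⊤ ∧ (∀ j < L.length, annSeq mul j ≠ ⊤) ∧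
  ∀ (i : ℕ) (h : i < L.length),
    L.get ⟨i, h⟩ =
      Module.finrank F (annSeq mul (i + 1)) - Module.finrank F (annSeq mul i)


section Construction

variable (F : Type*) [Field F]

/-- Squares of the natural basis vectors of the constructed algebra. -/
def sqvE (n m : ℕ) (hm : 3 ≤ m) : Fin (n + (m + 1)) → (Fin (n + (m + 1)) → F) := fun i =>
  if _h1 : (i : ℕ) < n then Pi.single ⟨n, by omega⟩ 1
  else if _h2 : (i : ℕ) = n then
    Pi.single ⟨n + 1, by omega⟩ 1 + Pi.single ⟨n + 2, by omega⟩ 1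
  else if _h3 : (i : ℕ) = n + m then 0
  else Pi.single ⟨(i : ℕ) + 1, by have := i.isLt; omega⟩ 1

/-- The multiplication of the constructed evolution algebra. -/
def emulE (n m : ℕ) (hm : 3 ≤ m) :
    (Fin (n + (m + 1)) → F) →ₗ[F] (Fin (n + (m + 1)) → F) →ₗ[F] (Fin (n + (m + 1)) → F) :=
  LinearMap.mk₂ F (fun x y => ∑ i, (x i * y i) • sqvE F n m hm i)
    (fun x x' y => by
      simp only [Pi.add_apply, add_mul, add_smul, Finset.sum_add_distrib])
    (fun c x y => by
      simp only [Pi.smul_apply, smul_eq_mul, Finset.smul_sum, mul_assoc, mul_smul])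
    (fun x y y' => by
      simp only [Pi.add_apply, mul_add, add_smul, Finset.sum_add_distrib])
    (fun c x y => by
      simp only [Pi.smul_apply, smul_eq_mul, Finset.smul_sum, mul_smul]
      congr 1; funext i; rw [smul_comm])

lemma emulE_apply (n m : ℕ) (hm : 3 ≤ m) (x y : Fin (n + (m + 1)) → F) :
    emulE F n m hm x y = ∑ i, (x i * y i) • sqvE F n m hm i :=
  rfl

lemma emulE_comm (n m : ℕ) (hm : 3 ≤ m) (x y : Fin (n + (m + 1)) → F) :
    emulE F n m hm x y = emulE F n m hm y x := by
  simp only [emulE_apply, mul_comm]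

lemma emulE_single_right (n m : ℕ) (hm : 3 ≤ m) (x : Fin (n + (m + 1)) → F)
    (j : Fin (n + (m + 1))) :
    emulE F n m hm x (Pi.single j 1) = x j • sqvE F n m hm j := by
  rw [emulE_apply, Finset.sum_eq_single j]
  · simp
  · intro l _ hl
    simp [Pi.single_eq_of_ne hl]
  · simp

lemma emulE_single_single (n m : ℕ) (hm : 3 ≤ m) (i j : Fin (n + (m + 1))) :
    emulE F n m hm (Pi.single i 1) (Pi.single j 1) =
      if i = j then sqvE F n m hm i else 0 := by
  rw [emulE_single_right]
  rcases eq_or_ne i j with rfl | h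
  · simp
  · simp [Pi.single_eq_of_ne (Ne.symm h), h]

/-- The submodule of vectors vanishing on the first `c` coordinates. -/
def zsub (N c : ℕ) : Submodule F (Fin N → F) where
  carrier := {x | ∀ l : Fin N, (l : ℕ) < c → x l = 0}
  zero_mem' := fun _ _ => rfl
  add_mem' := fun ha hb l hl => by
    simp only [Pi.add_apply, ha l hl, hb l hl, add_zero]
  smul_mem' := fun r x hx l hl => by
    simp only [Pi.smul_apply, hx l hl, smul_eq_mul, mul_zero]

lemma mem_zsub {F : Type*} [Field F] {N c : ℕ} {x : Fin N → F} :
    x ∈ zsub F N c ↔ ∀ l : Fin N, (l : ℕ) < c → x l = 0 :=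
  Iff.rfl

lemma zsub_eq_bot (N c : ℕ) (h : N ≤ c) : zsub F N c = ⊥ := by
  ext x
  simp only [mem_zsub, Submodule.mem_bot]
  constructor
  · intro hx; funext l; exact hx l (by have := l.isLt; omega)
  · rintro rfl l _; rfl

lemma zsub_ne_top (N c : ℕ) (hN : 0 < N) (hc : 0 < c) : zsub F N c ≠ ⊤ := by
  intro h
  have h1 : Pi.single (⟨0, hN⟩ : Fin N) (1 : F) ∈ zsub F N c := h ▸ Submodule.mem_top
  have h2 := h1 ⟨0, hN⟩ hc
  simp at h2

/-- Embedding of `Fin (N-c) → F` as the last coordinates. -/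
def zmap (N c : ℕ) : (Fin (N - c) → F) →ₗ[F] (Fin N → F) where
  toFun x := fun l => if h : c ≤ (l : ℕ) then x ⟨(l : ℕ) - c, by have := l.isLt; omega⟩ else 0
  map_add' x y := by funext l; by_cases h : c ≤ (l : ℕ) <;> simp [h]
  map_smul' r x := by funext l; by_cases h : c ≤ (l : ℕ) <;> simp [h]

lemma zmap_inj (N c : ℕ) (h : c ≤ N) : Function.Injective (zmap F N c) := by
  intro x y hxy
  funext j
  have hj : c + (j : ℕ) < N := by have := j.isLt; omega
  have := congrFun hxy ⟨c + (j : ℕ), hj⟩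
  have hv : c + (j : ℕ) - c = (j : ℕ) := by omega
  simpa [zmap, hv] using this

lemma zmap_range (N c : ℕ) (h : c ≤ N) : LinearMap.range (zmap F N c) = zsub F N c := by
  ext x
  simp only [LinearMap.mem_range, mem_zsub]
  constructor
  · rintro ⟨y, rfl⟩ l hl
    simp only [zmap, LinearMap.coe_mk, AddHom.coe_mk]
    rw [dif_neg (by omega)]
  · intro hx
    refine ⟨fun j => x ⟨c + (j : ℕ), by have := j.isLt; omega⟩, ?_⟩
    funext l
    simp only [zmap, LinearMap.coe_mk, AddHom.coe_mk]
    by_cases h2 : c ≤ (l : ℕ)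
    · rw [dif_pos h2]
      congr 1
      exact Fin.ext (by simp; omega)
    · rw [dif_neg h2, hx l (by omega)]

lemma finrank_zsub (N c : ℕ) (h : c ≤ N) :
    Module.finrank F (zsub F N c) = N - c := by
  rw [← zmap_range F N c h, LinearMap.finrank_range_of_inj (zmap_inj F N c h),
    Module.finrank_fin_fun]

end Construction

section AnnComp

variable (F : Type*) [Field F]

lemma mem_annSucc_emulE (n m : ℕ) (hm : 3 ≤ m) (S : Submodule F (Fin (n + (m + 1)) → F))
    (x : Fin (n + (m + 1)) → F) :
    x ∈ annSucc (emulE F n m hm) S ↔ ∀ i, x i • sqvE F n m hm i ∈ S := by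
  constructor
  · intro h i
    have h1 := (h (Pi.single i 1)).1
    rwa [emulE_single_right] at h1
  · intro h y
    have key : ∀ z, emulE F n m hm x z ∈ S := by
      intro z
      rw [emulE_apply]
      have he : ∀ i ∈ Finset.univ, (x i * z i) • sqvE F n m hm i
          = z i • (x i • sqvE F n m hm i) := by
        intro i _
        rw [smul_smul, mul_comm]
      rw [Finset.sum_congr rfl he]
      exact Submodule.sum_mem _ fun i _ => Submodule.smul_mem _ _ (h i)
    exact ⟨key y, by rw [emulE_comm]; exact key y⟩

lemma annSucc_zsub_step (n m : ℕ) (hm : 3 ≤ m) (c : ℕ) (hc1 : n + 1 ≤ c)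
    (hc2 : c ≤ n + m + 1) :
    annSucc (emulE F n m hm) (zsub F (n + (m + 1)) c)
      = zsub F (n + (m + 1)) (max n (c - 1)) := by
  ext x
  rw [mem_annSucc_emulE, mem_zsub]
  constructor
  · intro h l hl
    have hi := h l
    rw [mem_zsub] at hi
    by_cases h1 : (l : ℕ) < n
    · have h2 := hi ⟨n, by omega⟩ (show n < c by omega)
      simpa [sqvE, h1] using h2
    · by_cases h2 : (l : ℕ) = n
      · have hcn : n + 2 ≤ c := by omega
        have h3 := hi ⟨n + 1, by omega⟩ (show n + 1 < c by omega)
        have hne : (⟨n + 2, by omega⟩ : Fin (n + (m + 1))) ≠ ⟨n + 1, by omega⟩ :=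
          Fin.ne_of_val_ne (show n + 2 ≠ n + 1 by omega)
        simpa [sqvE, h1, h2, Pi.single_eq_of_ne hne] using h3
      · have h4 : (l : ℕ) < n + m := by omega
        have h5 : ¬ (l : ℕ) = n + m := by omega
        have h3 := hi ⟨(l : ℕ) + 1, by have := l.isLt; omega⟩
          (show (l : ℕ) + 1 < c by omega)
        simpa [sqvE, h1, h2, h5] using h3
  · intro hx i
    rw [mem_zsub]
    intro l hl
    by_cases hxi : x i = 0
    · simp [hxi]
    have hge : max n (c - 1) ≤ (i : ℕ) := by
      by_contra hcon
      exact hxi (hx i (by omega))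
    have h1 : ¬ (i : ℕ) < n := by omega
    by_cases h2 : (i : ℕ) = n
    · have hc : c = n + 1 := by omega
      have hne1 : l ≠ (⟨n + 1, by omega⟩ : Fin (n + (m + 1))) :=
        Fin.ne_of_val_ne (show (l : ℕ) ≠ n + 1 by omega)
      have hne2 : l ≠ (⟨n + 2, by omega⟩ : Fin (n + (m + 1))) :=
        Fin.ne_of_val_ne (show (l : ℕ) ≠ n + 2 by omega)
      simp [sqvE, h1, h2, Pi.single_eq_of_ne hne1, Pi.single_eq_of_ne hne2]
    · by_cases h3 : (i : ℕ) = n + m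
      · simp [sqvE, h1, h2, h3, show ¬ m = 0 by omega]
      · have hne : l ≠ (⟨(i : ℕ) + 1, by have := i.isLt; omega⟩ : Fin (n + (m + 1))) :=
          Fin.ne_of_val_ne (show (l : ℕ) ≠ (i : ℕ) + 1 by omega)
        simp [sqvE, h1, h2, h3, Pi.single_eq_of_ne hne]

lemma annSucc_zsub_top (n m : ℕ) (hm : 3 ≤ m) (c : ℕ) (hc : c ≤ n) :
    annSucc (emulE F n m hm) (zsub F (n + (m + 1)) c) = ⊤ := by
  rw [eq_top_iff]
  intro x _
  rw [mem_annSucc_emulE]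
  intro i
  rw [mem_zsub]
  intro l hl
  have hln : (l : ℕ) < n := by omega
  by_cases h1 : (i : ℕ) < n
  · have hne : l ≠ (⟨n, by omega⟩ : Fin (n + (m + 1))) :=
      Fin.ne_of_val_ne (show (l : ℕ) ≠ n by omega)
    simp [sqvE, h1, Pi.single_eq_of_ne hne]
  · by_cases h2 : (i : ℕ) = n
    · have hne1 : l ≠ (⟨n + 1, by omega⟩ : Fin (n + (m + 1))) :=
        Fin.ne_of_val_ne (show (l : ℕ) ≠ n + 1 by omega)
      have hne2 : l ≠ (⟨n + 2, by omega⟩ : Fin (n + (m + 1))) :=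
        Fin.ne_of_val_ne (show (l : ℕ) ≠ n + 2 by omega)
      simp [sqvE, h1, h2, Pi.single_eq_of_ne hne1, Pi.single_eq_of_ne hne2]
    · by_cases h3 : (i : ℕ) = n + m
      · simp [sqvE, h1, h2, h3, show ¬ m = 0 by omega]
      · have hne : l ≠ (⟨(i : ℕ) + 1, by have := i.isLt; omega⟩ : Fin (n + (m + 1))) :=
          Fin.ne_of_val_ne (show (l : ℕ) ≠ (i : ℕ) + 1 by omega)
        simp [sqvE, h1, h2, h3, Pi.single_eq_of_ne hne]


lemma annSeq_emulE (n m : ℕ) (hm : 3 ≤ m) :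
    ∀ j, 1 ≤ j → j ≤ m + 1 →
      annSeq (emulE F n m hm) j = zsub F (n + (m + 1)) (n + m + 1 - j) := by
  intro j
  induction j with
  | zero => omega
  | succ j ih =>
    intro _ hj2
    rcases Nat.eq_zero_or_pos j with rfl | hj
    · show annSucc (emulE F n m hm) (annSeq (emulE F n m hm) 0)
        = zsub F (n + (m + 1)) (n + m + 1 - 1)
      show annSucc (emulE F n m hm) ⊥ = zsub F (n + (m + 1)) (n + m + 1 - 1)
      rw [← zsub_eq_bot F (n + (m + 1)) (n + m + 1) (by omega),
        annSucc_zsub_step F n m hm (n + m + 1) (by omega) (by omega)]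
      congr 1
      omega
    · show annSucc (emulE F n m hm) (annSeq (emulE F n m hm) j)
        = zsub F (n + (m + 1)) (n + m + 1 - (j + 1))
      rw [ih hj (by omega),
        annSucc_zsub_step F n m hm (n + m + 1 - j) (by omega) (by omega)]
      congr 1
      omega

lemma annSeq_emulE_top (n m : ℕ) (hm : 3 ≤ m) :
    annSeq (emulE F n m hm) (m + 2) = ⊤ := by
  show annSucc (emulE F n m hm) (annSeq (emulE F n m hm) (m + 1)) = ⊤
  rw [annSeq_emulE F n m hm (m + 1) (by omega) le_rfl,
    show n + m + 1 - (m + 1) = n by omega]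
  exact annSucc_zsub_top F n m hm n le_rfl


lemma sqvE_first (n m : ℕ) (hm : 3 ≤ m) (k : ℕ) (hk : k < n) (h : k < n + (m + 1)) :
    sqvE F n m hm ⟨k, h⟩ = Pi.single (⟨n, by omega⟩ : Fin (n + (m + 1))) 1 :=
  dif_pos hk

lemma sqvE_eqn (n m : ℕ) (hm : 3 ≤ m) (h : n < n + (m + 1)) :
    sqvE F n m hm ⟨n, h⟩ = Pi.single (⟨n + 1, by omega⟩ : Fin (n + (m + 1))) 1
      + Pi.single (⟨n + 2, by omega⟩ : Fin (n + (m + 1))) 1 := by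
  simp only [sqvE]
  rw [dif_neg (show ¬ n < n by omega)]
  simp

lemma sqvE_mid (n m : ℕ) (hm : 3 ≤ m) (k : ℕ) (hk1 : n < k) (hk2 : k < n + m)
    (h : k < n + (m + 1)) :
    sqvE F n m hm ⟨k, h⟩ = Pi.single (⟨k + 1, by omega⟩ : Fin (n + (m + 1))) 1 := by
  simp only [sqvE]
  rw [dif_neg (show ¬ k < n by omega), dif_neg (show ¬ k = n by omega),
    dif_neg (show ¬ k = n + m by omega)]

lemma sqvE_last (n m : ℕ) (hm : 3 ≤ m) (h : n + m < n + (m + 1)) :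
    sqvE F n m hm ⟨n + m, h⟩ = 0 := by
  simp only [sqvE]
  rw [dif_neg (show ¬ n + m < n by omega), dif_neg (show ¬ n + m = n by omega)]
  simp

end AnnComp


/-- Over an algebraically closed field `F` of characteristic ≠ 2, for each
`k = m + 1 ≥ 4` and `n ≥ 1` there is a nilpotent evolution algebra of type `[1,…,1,n]`
(`k` ones followed by `n`) which is not isomorphic to `E(U, b, f_1, …, f_{k-1})` for any
`n`-dimensional `U`, nondegenerate symmetric bilinear `b`, and pairwise commuting, `b`-symmetric,
diagonalizable endomorphisms `f_1, …, f_{k-1}`. -/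
theorem exists_type1n_not_iso_EUbf
    (F : Type*) [Field F] [IsAlgClosed F] (h2 : (2 : F) ≠ 0)
    (m n : ℕ) (hm : 3 ≤ m) (hn : 1 ≤ n) :  -- `k = m + 1 ≥ 4`
    ∃ mul : (Fin (n + (m + 1)) → F) →ₗ[F] (Fin (n + (m + 1)) → F) →ₗ[F] (Fin (n + (m + 1)) → F),
      IsEvolutionAlgebra mul ∧ HasType mul (List.replicate (m + 1) 1 ++ [n]) ∧
      ∀ (U : Type*) (_ : AddCommGroup U) (_ : Module F U),
        Module.finrank F U = n →
        ∀ b : U →ₗ[F] U →ₗ[F] F, (∀ x y : U, b x y = b y x) →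
          (∀ x : U, (∀ y : U, b x y = 0) → x = 0) →
        ∀ f : Fin m → U →ₗ[F] U,
          (∀ i j, (f i).comp (f j) = (f j).comp (f i)) →
          (∀ (i : Fin m) (x y : U), b (f i x) y = b x (f i y)) →
          (∀ i : Fin m, ∃ e : Module.Basis (Fin n) F U, ∀ j, ∃ μ : F, f i (e j) = μ • e j) →
        ∀ mul' : (U × (Fin (m + 1) → F)) →ₗ[F] (U × (Fin (m + 1) → F)) →ₗ[F]
            (U × (Fin (m + 1) → F)),
          (∀ (x y : U) (α β : Fin (m + 1) → F),
            mul' (x, α) (y, β) =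
              (0, Fin.cases (motive := fun _ => F) (b x y)
                  (fun j : Fin m => b (f j x) y + α j.castSucc * β j.castSucc))) →
          ¬ ∃ φ : (Fin (n + (m + 1)) → F) ≃ₗ[F] (U × (Fin (m + 1) → F)),
              ∀ x y, φ (mul x y) = mul' (φ x) (φ y) := by
  refine ⟨emulE F n m hm, ⟨fun x y => emulE_comm F n m hm x y,
    n + (m + 1), Pi.basisFun F (Fin (n + (m + 1))), fun i j hij => ?_⟩, ?_, ?_⟩
  · rw [Pi.basisFun_apply, Pi.basisFun_apply, emulE_single_single, if_neg hij]
  · -- HasType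
    have hlen : (List.replicate (m + 1) 1 ++ [n]).length = m + 2 := by simp
    refine ⟨?_, ?_, ?_⟩
    · rw [hlen]
      exact annSeq_emulE_top F n m hm
    · intro j hj
      rw [hlen] at hj
      rcases Nat.eq_zero_or_pos j with rfl | hjp
      · show (⊥ : Submodule F (Fin (n + (m + 1)) → F)) ≠ ⊤
        rw [← zsub_eq_bot F (n + (m + 1)) (n + m + 1) (by omega)]
        exact zsub_ne_top F _ _ (by omega) (by omega)
      · rw [annSeq_emulE F n m hm j hjp (by omega)]
        exact zsub_ne_top F _ _ (by omega) (by omega)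
    · intro i h
      have h1 : ∀ j, 1 ≤ j → j ≤ m + 1 →
          Module.finrank F (annSeq (emulE F n m hm) j) = j := by
        intro j hj1 hj2
        rw [annSeq_emulE F n m hm j hj1 hj2, finrank_zsub F _ _ (by omega)]
        omega
      have hi : i < m + 2 := by rw [hlen] at h; exact h
      by_cases him : i < m + 1
      · rw [List.get_eq_getElem, List.getElem_append_left (by simpa using him),
          List.getElem_replicate]
        rw [h1 (i + 1) (by omega) (by omega)]
        rcases Nat.eq_zero_or_pos i with rfl | hip
        · rw [show annSeq (emulE F n m hm) 0 = ⊥ from rfl, finrank_bot F _]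
        · rw [h1 i hip (by omega)]
          omega
      · have hieq : i = m + 1 := by omega
        subst hieq
        rw [List.get_eq_getElem, List.getElem_append_right (by simp)]
        have ht : Module.finrank F (annSeq (emulE F n m hm) (m + 1 + 1)) = n + (m + 1) := by
          rw [annSeq_emulE_top F n m hm]
          rw [finrank_top F _]
          exact Module.finrank_fin_fun F
        rw [ht, h1 (m + 1) (by omega) le_rfl]
        simp
  · intro U _ _ hU b hbsymm hbnd f hfc hfs hfd mul' hmul'
    rintro ⟨φ, hφ⟩
    classical
    -- the distinguished natural basis vectors
    set vv : ℕ → (Fin (n + (m + 1)) → F) := fun j =>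
      if h : n + j < n + (m + 1) then Pi.single ⟨n + j, h⟩ 1 else 0 with hvvdef
    have hvv : ∀ (j : ℕ) (_hj : j ≤ m),
        vv j = Pi.single (⟨n + j, by omega⟩ : Fin (n + (m + 1))) 1 := by
      intro j hj
      simp only [hvvdef]
      rw [dif_pos (show n + j < n + (m + 1) by omega)]
    -- relations in the constructed algebra
    have hA1 : emulE F n m hm (Pi.single (⟨0, by omega⟩ : Fin (n + (m + 1))) 1)
        (Pi.single (⟨0, by omega⟩ : Fin (n + (m + 1))) 1) = vv 0 := by
      rw [emulE_single_single, if_pos rfl, hvv 0 (by omega)]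
      exact sqvE_first F n m hm 0 (by omega) (by omega)
    have hA2 : emulE F n m hm (vv 0) (vv 0) = vv 1 + vv 2 := by
      rw [hvv 0 (by omega), emulE_single_single, if_pos rfl, hvv 1 (by omega),
        hvv 2 (by omega)]
      exact sqvE_eqn F n m hm (by omega)
    have hA3 : ∀ j : ℕ, 1 ≤ j → j ≤ m - 1 →
        emulE F n m hm (vv j) (vv j) = vv (j + 1) := by
      intro j hj1 hj2
      rw [hvv j (by omega), emulE_single_single, if_pos rfl, hvv (j + 1) (by omega)]
      exact sqvE_mid F n m hm (n + j) (by omega) (by omega) (by omega)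
    have hA5 : ∀ j j' : ℕ, j ≤ m → j' ≤ m → j ≠ j' →
        emulE F n m hm (vv j) (vv j') = 0 := by
      intro j j' hj hj' hne
      rw [hvv j hj, hvv j' hj', emulE_single_single,
        if_neg (Fin.ne_of_val_ne (show n + j ≠ n + j' by omega))]
    have vvm_ne : vv m ≠ 0 := by
      rw [hvv m le_rfl]
      intro hcon
      have hcf := congrFun hcon ⟨n + m, by omega⟩
      simp at hcf
    -- structural facts about `mul'`
    have hP1 : ∀ p q : U × (Fin (m + 1) → F), (mul' p q).1 = 0 := by
      intro p q
      have hh := hmul' p.1 q.1 p.2 q.2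
      rw [Prod.mk.eta, Prod.mk.eta] at hh
      rw [hh]
    have hP0 : ∀ p q : U × (Fin (m + 1) → F), p.1 = 0 → (mul' p q).2 0 = 0 := by
      intro p q hp
      have hh := hmul' p.1 q.1 p.2 q.2
      rw [Prod.mk.eta, Prod.mk.eta] at hh
      rw [hh]
      simp [hp]
    have hPsucc : ∀ (p q : U × (Fin (m + 1) → F)) (i : Fin m), p.1 = 0 →
        (mul' p q).2 i.succ = p.2 i.castSucc * q.2 i.castSucc := by
      intro p q i hp
      have hh := hmul' p.1 q.1 p.2 q.2
      rw [Prod.mk.eta, Prod.mk.eta] at hh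
      rw [hh]
      simp [hp]
    -- images of the chain
    set X : ℕ → U × (Fin (m + 1) → F) := fun j => φ (vv j) with hXdef
    have hXprod : ∀ j : ℕ, 1 ≤ j → j ≤ m - 1 → X (j + 1) = mul' (X j) (X j) := by
      intro j h1 h2
      show φ (vv (j + 1)) = _
      rw [← hA3 j h1 h2, hφ]
    have hX0 : X 0 = mul' (φ (Pi.single (⟨0, by omega⟩ : Fin (n + (m + 1))) 1))
        (φ (Pi.single (⟨0, by omega⟩ : Fin (n + (m + 1))) 1)) := by
      show φ (vv 0) = _
      rw [← hA1, hφ]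
    have hX0U : (X 0).1 = 0 := by rw [hX0]; exact hP1 _ _
    have h22 : X 2 = mul' (X 1) (X 1) := hXprod 1 le_rfl (by omega)
    have hX2U : (X 2).1 = 0 := by rw [h22]; exact hP1 _ _
    have hsum : X 1 + X 2 = mul' (X 0) (X 0) := by
      show φ (vv 1) + φ (vv 2) = _
      rw [← map_add, ← hA2, hφ]
    have hX1U : (X 1).1 = 0 := by
      have hfst := congrArg Prod.fst hsum
      simp only [Prod.fst_add, hX2U, add_zero, hP1] at hfst
      exact hfst
    have hzero : ∀ j j' : ℕ, j ≤ m → j' ≤ m → j ≠ j' → mul' (X j) (X j') = 0 := by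
      intro j j' hj hj' hne
      show mul' (φ (vv j)) (φ (vv j')) = 0
      rw [← hφ, hA5 j j' hj hj' hne, map_zero]
    -- component relations
    have h23 : ∀ i : Fin m, (X 2).2 i.succ = (X 1).2 i.castSucc * (X 1).2 i.castSucc := by
      intro i
      rw [h22]
      exact hPsucc _ _ i hX1U
    have hs : ∀ i : Fin m,
        (X 1).2 i.succ + (X 2).2 i.succ = (X 0).2 i.castSucc * (X 0).2 i.castSucc := by
      intro i
      calc (X 1).2 i.succ + (X 2).2 i.succ = (X 1 + X 2).2 i.succ := rfl
        _ = (mul' (X 0) (X 0)).2 i.succ := by rw [hsum]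
        _ = _ := hPsucc _ _ i hX0U
    have ho01 : ∀ i : Fin m, (X 0).2 i.castSucc * (X 1).2 i.castSucc = 0 := by
      intro i
      have h := hPsucc (X 0) (X 1) i hX0U
      rw [hzero 0 1 (by omega) (by omega) (by omega)] at h
      simpa using h.symm
    have ho12 : ∀ i : Fin m, (X 1).2 i.castSucc * (X 2).2 i.castSucc = 0 := by
      intro i
      have h := hPsucc (X 1) (X 2) i hX1U
      rw [hzero 1 2 (by omega) (by omega) (by omega)] at h
      simpa using h.symm
    -- the indices 0, 1, 2 of `Fin m`
    have hm0 : (0 : ℕ) < m := by omega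
    have hm1 : (1 : ℕ) < m := by omega
    have hm2 : (2 : ℕ) < m := by omega
    set i0 : Fin m := ⟨0, hm0⟩ with hi0
    set i1 : Fin m := ⟨1, hm1⟩ with hi1
    set i2 : Fin m := ⟨2, hm2⟩ with hi2
    have e01 : i0.succ = i1.castSucc := rfl
    have e12 : i1.succ = i2.castSucc := rfl
    by_cases ht0 : (X 1).2 i0.castSucc = 0
    · by_cases ht1 : (X 1).2 i1.castSucc = 0
      · -- both low coefficients vanish: the whole chain dies, contradicting injectivity
        have claim : ∀ j : ℕ, j ≤ m - 1 → (X (1 + j)).1 = 0 ∧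
            ∀ i : Fin (m + 1), (i : ℕ) ≤ 1 + j → (X (1 + j)).2 i = 0 := by
          intro j
          induction j with
          | zero =>
            intro _
            refine ⟨hX1U, ?_⟩
            rintro ⟨iv, hiv⟩ hi
            simp only at hi
            interval_cases iv
            · exact ht0
            · exact ht1
          | succ j ih =>
            intro hj
            have ihj := ih (by omega)
            have hX : X (1 + j + 1) = mul' (X (1 + j)) (X (1 + j)) :=
              hXprod (1 + j) (by omega) (by omega)
            constructor
            · rw [show (1 + (j + 1)) = 1 + j + 1 from rfl, hX]
              exact hP1 _ _
            · intro i hi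
              rcases Fin.eq_zero_or_eq_succ i with rfl | ⟨i', rfl⟩
              · rw [show (1 + (j + 1)) = 1 + j + 1 from rfl, hX]
                exact hP0 _ _ ihj.1
              · rw [show (1 + (j + 1)) = 1 + j + 1 from rfl, hX,
                  hPsucc _ _ i' ihj.1,
                  ihj.2 i'.castSucc (by
                    simp only [Fin.val_succ] at hi
                    simp only [Fin.coe_castSucc]
                    omega), zero_mul]
        have hXm := claim (m - 1) le_rfl
        rw [show 1 + (m - 1) = m by omega] at hXm
        have hXm0 : X m = 0 := by
          refine Prod.ext hXm.1 (funext fun i => ?_)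
          exact hXm.2 i (by have := i.isLt; omega)
        exact vvm_ne (φ.map_eq_zero_iff.mp hXm0)
      · -- t0 = 0, t1 ≠ 0
        have d2 : (X 2).2 i2.castSucc = (X 1).2 i1.castSucc * (X 1).2 i1.castSucc := by
          rw [← e12]; exact h23 i1
        have o2 := ho12 i2
        rw [d2] at o2
        have ha12 : (X 1).2 i2.castSucc = 0 := by
          rcases mul_eq_zero.mp o2 with h | h
          · exact h
          · exact absurd (mul_self_eq_zero.mp h) ht1
        have s1 := hs i1
        rw [e12, ha12, d2, zero_add] at s1
        have o01 := ho01 i1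
        rcases mul_eq_zero.mp o01 with h | h
        · rw [h, mul_zero] at s1
          exact ht1 (mul_self_eq_zero.mp s1)
        · exact ht1 h
    · -- t0 ≠ 0
      have d1 : (X 2).2 i1.castSucc = (X 1).2 i0.castSucc * (X 1).2 i0.castSucc := by
        rw [← e01]; exact h23 i0
      have o1 := ho12 i1
      rw [d1] at o1
      have ht1 : (X 1).2 i1.castSucc = 0 := by
        rcases mul_eq_zero.mp o1 with h | h
        · exact h
        · exact absurd (mul_self_eq_zero.mp h) ht0
      have s0 := hs i0
      rw [e01, ht1, d1, zero_add] at s0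
      have o01 := ho01 i0
      rcases mul_eq_zero.mp o01 with h | h
      · rw [h, mul_zero] at s0
        exact ht0 (mul_self_eq_zero.mp s0)
      · exact ht0 h
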